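/- Let A be a real n×m matrix with n < m and full row rank (so AAᵀ is invertible), let b ∈ ℝ^n, and suppose x* is a minimizer of ‖·‖₀ over {x ∈ ℝ^m : Ax = b} with t = ‖x*‖₀ ≥ 1, and that every nonzero x ∈ Ker(A) satisfies ‖x‖₀ ≥ 2t+1. Let 0 < u ≤ w be constants such that u‖z‖₂ ≤ ‖Az‖₂ ≤ w‖z‖₂ for every z ∈ ℝ^m with ‖z‖₀ ≤ 2t, and set λ = w²/u², C = ((√2+1)/2)·[ (λ−1)(m−3)/2 + λ + √(1/2) ], h(x) = (ln(x+1) − ln x)/ln C, S* = ‖Aᵀ(AAᵀ)⁻¹b‖₀, and p*(A,b) = max{ h(S*), h(⌊(2m−5)/4⌋ + 1) }. Then for every p with 0 < p < p*(A,b) and p ≤ 1, x* is the unique minimizer of ‖·‖_p^p over {x ∈ ℝ^m : Ax = b}; that is, every y ≠ x* with Ay = b satisfies ‖x*‖_p^p < ‖y‖_p^p. -/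

import Mathlib

/-- The number of nonzero entries of a vector (the "l0-norm"). -/
noncomputable def l0norm {m : ℕ} (x : Fin m → ℝ) : ℕ :=
  (Finset.univ.filter (fun i => x i ≠ 0)).card

/-- The Euclidean norm of a vector in `ℝ^k`. -/
noncomputable def l2norm {k : ℕ} (x : Fin k → ℝ) : ℝ :=
  Real.sqrt (∑ i, (x i) ^ 2)

lemma l2sq {k : ℕ} (x : Fin k → ℝ) : l2norm x ^ 2 = ∑ i, x i ^ 2 :=
  Real.sq_sqrt (Finset.sum_nonneg fun i _ => sq_nonneg _)

lemma l2nonneg {k : ℕ} (x : Fin k → ℝ) : 0 ≤ l2norm x := Real.sqrt_nonneg _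

lemma rpow_subadd {X Y p : ℝ} (hX : 0 ≤ X) (hY : 0 ≤ Y) (hp : 0 ≤ p) (hp1 : p ≤ 1) :
    (X + Y) ^ p ≤ X ^ p + Y ^ p := by
  have h := NNReal.rpow_add_le_add_rpow X.toNNReal Y.toNNReal hp hp1
  have h2 := NNReal.coe_le_coe.mpr h
  push_cast [NNReal.coe_rpow] at h2
  rwa [Real.coe_toNNReal X hX, Real.coe_toNNReal Y hY] at h2

lemma rpow_tri (a b : ℝ) {p : ℝ} (hp : 0 < p) (hp1 : p ≤ 1) :
    |a| ^ p ≤ |a + b| ^ p + |b| ^ p := by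
  have h1 : |a| ≤ |a + b| + |b| := by
    have := abs_add_le (a + b) (-b); simpa using this
  calc |a| ^ p ≤ (|a + b| + |b|) ^ p :=
        Real.rpow_le_rpow (abs_nonneg _) h1 hp.le
    _ ≤ |a + b| ^ p + |b| ^ p := rpow_subadd (abs_nonneg _) (abs_nonneg _) hp.le hp1

lemma exists_top {α : Type*} [DecidableEq α] (f : α → ℝ) (F : Finset α) :
    ∀ k : ℕ, k ≤ F.card → ∃ S : Finset α, S ⊆ F ∧ S.card = k ∧
      ∀ i ∈ F \ S, ∀ j ∈ S, f i ≤ f j := by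
  intro k
  induction k with
  | zero => intro _; exact ⟨∅, Finset.empty_subset _, Finset.card_empty, by simp⟩
  | succ k ih =>
    intro hk
    obtain ⟨S, hSF, hScard, hdom⟩ := ih (Nat.le_of_succ_le hk)
    have hne : (F \ S).Nonempty := by
      rw [← Finset.card_pos, Finset.card_sdiff_of_subset hSF]; omega
    obtain ⟨a, haFS, hmax⟩ := Finset.exists_max_image (F \ S) f hne
    have haS : a ∉ S := (Finset.mem_sdiff.mp haFS).2
    refine ⟨insert a S, ?_, ?_, ?_⟩
    · exact Finset.insert_subset (Finset.mem_sdiff.mp haFS).1 hSF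
    · rw [Finset.card_insert_of_notMem haS, hScard]
    · intro i hi j hj
      have hiF : i ∈ F := (Finset.mem_sdiff.mp hi).1
      have hiS' : i ∉ insert a S := (Finset.mem_sdiff.mp hi).2
      have hiFS : i ∈ F \ S :=
        Finset.mem_sdiff.mpr ⟨hiF, fun hiS => hiS' (Finset.mem_insert_of_mem hiS)⟩
      rcases Finset.mem_insert.mp hj with rfl | hjS
      · exact hmax i hiFS
      · exact hdom i hiFS j hjS

lemma l0_comb {m : ℕ} (z₁ z₂ : Fin m → ℝ) (c d : ℝ) :
    l0norm (fun i => c * z₁ i + d * z₂ i) ≤ l0norm z₁ + l0norm z₂ := by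
  unfold l0norm
  refine le_trans (Finset.card_le_card ?_) (Finset.card_union_le _ _)
  intro i hi
  simp only [Finset.mem_filter, Finset.mem_union, Finset.mem_univ, true_and] at hi ⊢
  by_contra hc
  push_neg at hc
  obtain ⟨h1, h2⟩ := hc
  apply hi; rw [h1, h2]; ring

lemma mulVec_comb {n m : ℕ} (A : Matrix (Fin n) (Fin m) ℝ) (c d : ℝ) (z₁ z₂ : Fin m → ℝ) :
    A.mulVec (fun i => c * z₁ i + d * z₂ i) =
      fun j => c * (A.mulVec z₁) j + d * (A.mulVec z₂) j := by
  funext j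
  simp only [Matrix.mulVec, dotProduct]
  rw [Finset.mul_sum, Finset.mul_sum, ← Finset.sum_add_distrib]
  exact Finset.sum_congr rfl fun k _ => by ring

lemma mulVec_sum {n m : ℕ} {ι : Type*} (A : Matrix (Fin n) (Fin m) ℝ) (s : Finset ι)
    (g : ι → Fin m → ℝ) :
    A.mulVec (∑ i ∈ s, g i) = ∑ i ∈ s, A.mulVec (g i) := by
  funext j
  simp only [Matrix.mulVec, dotProduct, Finset.sum_apply, Finset.mul_sum]
  exact Finset.sum_comm

lemma sum_sq_comb {k : ℕ} (a b : Fin k → ℝ) (c d : ℝ) :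
    ∑ j, (c * a j + d * b j) ^ 2 =
      c ^ 2 * ∑ j, a j ^ 2 + 2 * (c * d) * ∑ j, a j * b j + d ^ 2 * ∑ j, b j ^ 2 := by
  rw [Finset.mul_sum, Finset.mul_sum, Finset.mul_sum, ← Finset.sum_add_distrib,
    ← Finset.sum_add_distrib]
  exact Finset.sum_congr rfl fun j _ => by ring

lemma cross_half {n m t : ℕ} (A : Matrix (Fin n) (Fin m) ℝ) (u w : ℝ)
    (hA2 : ∀ z : Fin m → ℝ, l0norm z ≤ 2 * t →
      u ^ 2 * ∑ i, z i ^ 2 ≤ (∑ j, (A.mulVec z) j ^ 2) ∧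
      (∑ j, (A.mulVec z) j ^ 2) ≤ w ^ 2 * ∑ i, z i ^ 2)
    (z₁ z₂ : Fin m → ℝ) (hd : ∀ i, z₁ i = 0 ∨ z₂ i = 0)
    (hsp : l0norm z₁ + l0norm z₂ ≤ 2 * t) :
    ∑ j, (A.mulVec z₁) j * (A.mulVec z₂) j ≤
      (w ^ 2 - u ^ 2) / 2 * (l2norm z₁ * l2norm z₂) := by
  by_cases h1 : (∑ i, z₁ i ^ 2) = 0
  · have hz : z₁ = 0 := by
      funext i
      have := (Finset.sum_eq_zero_iff_of_nonneg (fun i _ => sq_nonneg (z₁ i))).mp h1 i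
        (Finset.mem_univ i)
      exact pow_eq_zero_iff (by norm_num) |>.mp this
    rw [hz, Matrix.mulVec_zero]
    simp [l2norm, hz]
  by_cases h2 : (∑ i, z₂ i ^ 2) = 0
  · have hz : z₂ = 0 := by
      funext i
      have := (Finset.sum_eq_zero_iff_of_nonneg (fun i _ => sq_nonneg (z₂ i))).mp h2 i
        (Finset.mem_univ i)
      exact pow_eq_zero_iff (by norm_num) |>.mp this
    rw [hz, Matrix.mulVec_zero]
    simp [l2norm, hz]
  set n₁ := l2norm z₁ with hn₁def
  set n₂ := l2norm z₂ with hn₂def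
  have hsq₁ : (∑ i, z₁ i ^ 2) = n₁ ^ 2 := (l2sq z₁).symm
  have hsq₂ : (∑ i, z₂ i ^ 2) = n₂ ^ 2 := (l2sq z₂).symm
  have hn₁pos : 0 < n₁ := by
    rcases lt_or_eq_of_le (l2nonneg z₁) with h | h
    · exact h
    · exfalso; apply h1; rw [hsq₁, hn₁def, ← h]; ring
  have hn₂pos : 0 < n₂ := by
    rcases lt_or_eq_of_le (l2nonneg z₂) with h | h
    · exact h
    · exfalso; apply h2; rw [hsq₂, hn₂def, ← h]; ring
  set s := Real.sqrt (n₂ / n₁) with hsdef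
  have hspos : 0 < s := Real.sqrt_pos.mpr (by positivity)
  have hs2 : s ^ 2 = n₂ / n₁ := Real.sq_sqrt (by positivity)
  have hsinv2 : (s⁻¹) ^ 2 = n₁ / n₂ := by
    rw [inv_pow, hs2, inv_div]
  have hss : s * s⁻¹ = 1 := mul_inv_cancel₀ (ne_of_gt hspos)
  have hcross0 : (∑ i, z₁ i * z₂ i) = 0 :=
    Finset.sum_eq_zero fun i _ => by rcases hd i with h | h <;> simp [h]
  -- sparsity of combinations
  have hl0p : l0norm (fun i => s * z₁ i + s⁻¹ * z₂ i) ≤ 2 * t :=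
    le_trans (l0_comb z₁ z₂ s s⁻¹) hsp
  have hl0m : l0norm (fun i => s * z₁ i + (-s⁻¹) * z₂ i) ≤ 2 * t :=
    le_trans (l0_comb z₁ z₂ s (-s⁻¹)) hsp
  have hM : s ^ 2 * (∑ i, z₁ i ^ 2) + 2 * (s * s⁻¹) * (∑ i, z₁ i * z₂ i)
      + (s⁻¹) ^ 2 * (∑ i, z₂ i ^ 2) = 2 * (n₁ * n₂) := by
    rw [hsq₁, hsq₂, hcross0, hs2, hsinv2]
    field_simp
    ring
  have hM' : s ^ 2 * (∑ i, z₁ i ^ 2) + 2 * (s * (-s⁻¹)) * (∑ i, z₁ i * z₂ i)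
      + (-s⁻¹) ^ 2 * (∑ i, z₂ i ^ 2) = 2 * (n₁ * n₂) := by
    rw [hsq₁, hsq₂, hcross0]
    rw [show ((-s⁻¹ : ℝ)) ^ 2 = (s⁻¹) ^ 2 by ring, hs2, hsinv2]
    field_simp
    ring
  have ep := (hA2 _ hl0p).2
  have em := (hA2 _ hl0m).1
  rw [mulVec_comb, sum_sq_comb, sum_sq_comb, hM] at ep
  rw [mulVec_comb, sum_sq_comb, sum_sq_comb, hM'] at em
  rw [hss] at ep
  rw [show s * (-s⁻¹) = -1 by rw [mul_neg, hss]] at em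
  nlinarith [ep, em, mul_pos hn₁pos hn₂pos]

lemma cross_abs {n m t : ℕ} (A : Matrix (Fin n) (Fin m) ℝ) (u w : ℝ)
    (hA2 : ∀ z : Fin m → ℝ, l0norm z ≤ 2 * t →
      u ^ 2 * ∑ i, z i ^ 2 ≤ (∑ j, (A.mulVec z) j ^ 2) ∧
      (∑ j, (A.mulVec z) j ^ 2) ≤ w ^ 2 * ∑ i, z i ^ 2)
    (z₁ z₂ : Fin m → ℝ) (hd : ∀ i, z₁ i = 0 ∨ z₂ i = 0)
    (hsp : l0norm z₁ + l0norm z₂ ≤ 2 * t) :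
    |∑ j, (A.mulVec z₁) j * (A.mulVec z₂) j| ≤
      (w ^ 2 - u ^ 2) / 2 * (l2norm z₁ * l2norm z₂) := by
  refine abs_le.mpr ⟨?_, cross_half A u w hA2 z₁ z₂ hd hsp⟩
  have hd' : ∀ i, z₁ i = 0 ∨ (-z₂) i = 0 := fun i => by
    rcases hd i with h | h
    · exact Or.inl h
    · exact Or.inr (by simp [h])
  have hl0 : l0norm (-z₂) = l0norm z₂ := by
    unfold l0norm
    congr 1
    apply Finset.filter_congr
    intro i _
    simp
  have hsp' : l0norm z₁ + l0norm (-z₂) ≤ 2 * t := by rw [hl0]; exact hsp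
  have hl2 : l2norm (-z₂) = l2norm z₂ := by
    unfold l2norm
    congr 1
    exact Finset.sum_congr rfl fun i _ => by simp
  have h := cross_half A u w hA2 z₁ (-z₂) hd' hsp'
  rw [Matrix.mulVec_neg, hl2] at h
  have hsum : ∑ j, (A.mulVec z₁) j * (-(A.mulVec z₂)) j
      = -∑ j, (A.mulVec z₁) j * (A.mulVec z₂) j := by
    rw [← Finset.sum_neg_distrib]
    exact Finset.sum_congr rfl fun j _ => by simp [Pi.neg_apply]
  rw [hsum] at h
  linarith

set_option maxHeartbeats 2000000 in
/-- Theorem 4, main result: with `A` underdetermined of full row rank,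
`x*` the unique `l₀`-minimizer of sparsity `t ≥ 1`, the null-space hypothesis
`‖x‖₀ ≥ 2t+1`, restricted frame constants `0 < u ≤ w` on `2t`-sparse vectors,
`λ = w²/u²`, `C = ((√2+1)/2)[(λ−1)(m−3)/2 + λ + √(1/2)]`,
`h(x) = (ln(x+1) − ln x)/ln C`, `S* = ‖Aᵀ(AAᵀ)⁻¹b‖₀`, and
`p*(A,b) = max{h(S*), h(⌊(2m−5)/4⌋+1)}`:  for every `0 < p < p*(A,b)` with `p ≤ 1`,
`x*` is the unique minimizer of `‖·‖_p^p` over `{x | A x = b}`. -/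
theorem stmt12 (n m : ℕ) (hnm : n < m) (A : Matrix (Fin n) (Fin m) ℝ)
    (hrank : IsUnit (A * A.transpose).det)
    (b : Fin n → ℝ) (xstar : Fin m → ℝ)
    (hxstar : A.mulVec xstar = b)
    (hmin : ∀ y : Fin m → ℝ, A.mulVec y = b → l0norm xstar ≤ l0norm y)
    (t : ℕ) (htdef : t = l0norm xstar) (ht : 1 ≤ t)
    (hker : ∀ x : Fin m → ℝ, x ≠ 0 → A.mulVec x = 0 → 2 * t + 1 ≤ l0norm x)
    (u w : ℝ) (hu : 0 < u) (huw : u ≤ w)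
    (hA : ∀ z : Fin m → ℝ, l0norm z ≤ 2 * t →
      u * l2norm z ≤ l2norm (A.mulVec z) ∧ l2norm (A.mulVec z) ≤ w * l2norm z)
    (lam C : ℝ) (hlam : lam = w ^ 2 / u ^ 2)
    (hC : C = (Real.sqrt 2 + 1) / 2 *
      ((lam - 1) * ((m : ℝ) - 3) / 2 + lam + Real.sqrt (1 / 2)))
    (h : ℝ → ℝ) (hh : ∀ x : ℝ, h x = (Real.log (x + 1) - Real.log x) / Real.log C)
    (Sstar : ℕ) (hSstar : Sstar = l0norm (A.transpose.mulVec ((A * A.transpose)⁻¹.mulVec b)))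
    (pstar : ℝ) (hpstar : pstar = max (h Sstar) (h ((2 * m - 5) / 4 + 1 : ℕ))) :
    ∀ p : ℝ, 0 < p → p < pstar → p ≤ 1 →
      ∀ y : Fin m → ℝ, A.mulVec y = b → y ≠ xstar →
        ∑ i, |xstar i| ^ p < ∑ i, |y i| ^ p := by
  intro p hp hpp hp1 y hAy hne
  -- squared frame bounds
  have hA2 : ∀ z : Fin m → ℝ, l0norm z ≤ 2 * t →
      u ^ 2 * ∑ i, z i ^ 2 ≤ (∑ j, (A.mulVec z) j ^ 2) ∧
      (∑ j, (A.mulVec z) j ^ 2) ≤ w ^ 2 * ∑ i, z i ^ 2 := by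
    intro z hz
    obtain ⟨hl, hr⟩ := hA z hz
    constructor
    · calc u ^ 2 * ∑ i, z i ^ 2 = (u * l2norm z) ^ 2 := by rw [mul_pow, l2sq]
        _ ≤ (l2norm (A.mulVec z)) ^ 2 := by
            apply pow_le_pow_left₀ (mul_nonneg hu.le (l2nonneg _)) hl
        _ = ∑ j, (A.mulVec z) j ^ 2 := l2sq _
    · calc (∑ j, (A.mulVec z) j ^ 2) = (l2norm (A.mulVec z)) ^ 2 := (l2sq _).symm
        _ ≤ (w * l2norm z) ^ 2 := by
            apply pow_le_pow_left₀ (l2nonneg _) hr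
        _ = w ^ 2 * ∑ i, z i ^ 2 := by rw [mul_pow, l2sq]
  -- setup
  set T : Finset (Fin m) := Finset.univ.filter (fun i => xstar i ≠ 0) with hT
  have hTcard : T.card = t := htdef.symm
  set v : Fin m → ℝ := y - xstar with hv
  have hvi : ∀ i, v i = y i - xstar i := fun i => rfl
  have hvne : v ≠ 0 := sub_ne_zero.mpr hne
  have hAv : A.mulVec v = 0 := by
    rw [hv, Matrix.mulVec_sub, hAy, hxstar, sub_self]
  have hl0v : 2 * t + 1 ≤ l0norm v := hker v hvne hAv
  have hl0vm : l0norm v ≤ m := le_trans (Finset.card_filter_le _ _) (by simp)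
  have h2tm : 2 * t + 1 ≤ m := le_trans hl0v hl0vm
  set V : Finset (Fin m) := Finset.univ.filter (fun i => v i ≠ 0) with hV
  have hVcard : V.card = l0norm v := rfl
  set U : Finset (Fin m) := V \ T with hU
  have hUcard : t + 1 ≤ U.card := by
    have hsub : V ⊆ U ∪ T := fun i hi => by
      by_cases hh' : i ∈ T
      · exact Finset.mem_union_right _ hh'
      · exact Finset.mem_union_left _ (Finset.mem_sdiff.mpr ⟨hi, hh'⟩)
    have h1 := (Finset.card_le_card hsub).trans (Finset.card_union_le _ _)
    rw [hVcard] at h1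
    omega
  obtain ⟨S₁, hS₁U, hS₁card, hdom⟩ := exists_top (fun i => |v i|) U (t + 1) hUcard
  have hS₁ne : S₁.Nonempty := Finset.card_pos.mp (by rw [hS₁card]; omega)
  obtain ⟨a₀, ha₀S₁, hmin₀⟩ := Finset.exists_min_image S₁ (fun i => |v i|) hS₁ne
  set μ := |v a₀| with hμ
  have ha₀U : a₀ ∈ U := hS₁U ha₀S₁
  have hμpos : 0 < μ := by
    have := (Finset.mem_filter.mp (Finset.mem_sdiff.mp ha₀U).1).2
    exact abs_pos.mpr this
  set S : Finset (Fin m) := S₁.erase a₀ with hS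
  have hScard : S.card = t := by
    rw [hS, Finset.card_erase_of_mem ha₀S₁, hS₁card]; omega
  have hSsub : S ⊆ S₁ := Finset.erase_subset _ _
  have hUT : ∀ i ∈ U, i ∉ T := fun i hi => (Finset.mem_sdiff.mp hi).2
  have hdisjTS : Disjoint T S := Finset.disjoint_left.mpr
    (fun i hiT hiS => (hUT i (hS₁U (hSsub hiS))) hiT)
  set W : Finset (Fin m) := T ∪ S with hW
  have hWcard : W.card = 2 * t := by
    rw [hW, Finset.card_union_of_disjoint hdisjTS, hTcard, hScard]; ring
  set rest : Finset (Fin m) := Finset.univ \ W with hrest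
  have hrestbound : ∀ i ∈ rest, |v i| ≤ μ := by
    intro i hi
    have hiW : i ∉ W := (Finset.mem_sdiff.mp hi).2
    have hiT : i ∉ T := fun hc => hiW (Finset.mem_union_left _ hc)
    have hiS : i ∉ S := fun hc => hiW (Finset.mem_union_right _ hc)
    by_cases hvi0 : v i = 0
    · simp [hvi0]; exact hμpos.le
    · have hiU : i ∈ U := Finset.mem_sdiff.mpr
        ⟨Finset.mem_filter.mpr ⟨Finset.mem_univ _, hvi0⟩, hiT⟩
      by_cases hiS₁ : i ∈ S₁
      · have : i = a₀ := by
          by_contra hne'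
          exact hiS (Finset.mem_erase.mpr ⟨hne', hiS₁⟩)
        rw [this]
      · exact hdom i (Finset.mem_sdiff.mpr ⟨hiU, hiS₁⟩) a₀ ha₀S₁
  have hrestcard : rest.card = m - 2 * t := by
    rw [hrest, Finset.card_sdiff_of_subset (Finset.subset_univ _), hWcard, Finset.card_univ,
      Fintype.card_fin]
  -- restriction
  set r : Finset (Fin m) → (Fin m → ℝ) := fun F i => if i ∈ F then v i else 0 with hr
  have hl0r : ∀ F, l0norm (r F) ≤ F.card := by
    intro F
    apply Finset.card_le_card
    intro i hi
    simp only [Finset.mem_filter, Finset.mem_univ, true_and, hr] at hi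
    by_contra hc
    simp [hc] at hi
  have hsumsq : ∀ F, (∑ i, (r F) i ^ 2) = ∑ i ∈ F, v i ^ 2 := by
    intro F
    calc (∑ i, (r F) i ^ 2) = ∑ i, (if i ∈ F then v i ^ 2 else 0) :=
          Finset.sum_congr rfl fun i _ => by by_cases hiF : i ∈ F <;> simp [hr, hiF]
      _ = ∑ i ∈ Finset.univ ∩ F, v i ^ 2 := Finset.sum_ite_mem _ _ _
      _ = ∑ i ∈ F, v i ^ 2 := by rw [Finset.univ_inter]
  -- key quantities
  set xT := l2norm (r T) with hxT
  set xS := l2norm (r S) with hxS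
  set P := ∑ i ∈ rest, |v i| with hP
  have hxT0 : 0 ≤ xT := l2nonneg _
  have hxS0 : 0 ≤ xS := l2nonneg _
  have hP0 : 0 ≤ P := Finset.sum_nonneg fun i _ => abs_nonneg _
  have hwu : 0 ≤ w ^ 2 - u ^ 2 := by nlinarith
  have hWsplit : ∀ i, r W i = r T i + r S i := by
    intro i
    by_cases hiT : i ∈ T
    · have hiS : i ∉ S := Finset.disjoint_left.mp hdisjTS hiT
      simp [hr, hiT, hiS, hW, Finset.mem_union]
    · by_cases hiS : i ∈ S <;> simp [hr, hiT, hiS, hW, Finset.mem_union]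
  have hvsplit : v = r W + r rest := by
    funext i
    by_cases hiW : i ∈ W
    · have hir : i ∉ rest := by simp [hrest, hiW]
      simp [hr, hiW, hir, Pi.add_apply]
    · have hir : i ∈ rest := by simp [hrest, hiW]
      simp [hr, hiW, hir, Pi.add_apply]
  have hAsplit : A.mulVec (r W) + A.mulVec (r rest) = 0 := by
    rw [← Matrix.mulVec_add, ← hvsplit, hAv]
  have hrsum : r rest = ∑ i ∈ rest, r {i} := by
    funext k
    rw [Finset.sum_apply]
    show (if k ∈ rest then v k else 0)
      = ∑ i ∈ rest, (if k ∈ ({i} : Finset (Fin m)) then v k else 0)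
    simp only [Finset.mem_singleton]
    rw [Finset.sum_ite_eq rest k (fun _ => v k)]
  have hArest : A.mulVec (r rest) = ∑ i ∈ rest, A.mulVec (r {i}) := by
    rw [hrsum, mulVec_sum]
  have hl0W : l0norm (r W) ≤ 2 * t := by rw [← hWcard]; exact hl0r W
  have hQlow := (hA2 (r W) hl0W).1
  have hsumW : (∑ i, (r W) i ^ 2) = xT ^ 2 + xS ^ 2 := by
    rw [hxT, hxS, l2sq, l2sq, hsumsq, hsumsq, hsumsq, hW, Finset.sum_union hdisjTS]
  have hkey : (∑ j, (A.mulVec (r W)) j ^ 2)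
      = - ∑ j, (A.mulVec (r W)) j * (A.mulVec (r rest)) j := by
    have h0 : ∀ j, (A.mulVec (r W)) j + (A.mulVec (r rest)) j = 0 := fun j => by
      have := congrFun hAsplit j
      simpa using this
    have hsum0 : (∑ j, (A.mulVec (r W)) j ^ 2)
        + ∑ j, (A.mulVec (r W)) j * (A.mulVec (r rest)) j = 0 := by
      rw [← Finset.sum_add_distrib]
      apply Finset.sum_eq_zero
      intro j _
      have hj : (A.mulVec (r rest)) j = -((A.mulVec (r W)) j) := by linarith [h0 j]
      rw [hj]; ring
    linarith
  have hl2single : ∀ i : Fin m, l2norm (r {i}) = |v i| := by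
    intro i
    simp only [l2norm]
    rw [hsumsq, Finset.sum_singleton, Real.sqrt_sq_eq_abs]
  have hdisj_single : ∀ (F : Finset (Fin m)) (i : Fin m), i ∉ F →
      ∀ k, r F k = 0 ∨ r {i} k = 0 := by
    intro F i hiF k
    by_cases hkF : k ∈ F
    · right
      have hki : k ≠ i := fun hk => hiF (hk ▸ hkF)
      simp [hr, Finset.mem_singleton, hki]
    · left; simp [hr, hkF]
  have hcrossT : ∀ i ∈ rest, |∑ j, (A.mulVec (r T)) j * (A.mulVec (r {i})) j|
      ≤ (w ^ 2 - u ^ 2) / 2 * (xT * |v i|) := by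
    intro i hi
    have hiT : i ∉ T := fun hc => (Finset.mem_sdiff.mp hi).2 (Finset.mem_union_left _ hc)
    have hsp : l0norm (r T) + l0norm (r {i}) ≤ 2 * t := by
      have h1 := hl0r T; have h2 := hl0r {i}
      rw [hTcard] at h1
      rw [Finset.card_singleton] at h2
      omega
    have hres := cross_abs A u w hA2 (r T) (r {i}) (hdisj_single T i hiT) hsp
    rw [hl2single i, ← hxT] at hres
    exact hres
  have hcrossS : ∀ i ∈ rest, |∑ j, (A.mulVec (r S)) j * (A.mulVec (r {i})) j|
      ≤ (w ^ 2 - u ^ 2) / 2 * (xS * |v i|) := by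
    intro i hi
    have hiS : i ∉ S := fun hc => (Finset.mem_sdiff.mp hi).2 (Finset.mem_union_right _ hc)
    have hsp : l0norm (r S) + l0norm (r {i}) ≤ 2 * t := by
      have h1 := hl0r S; have h2 := hl0r {i}
      rw [hScard] at h1
      rw [Finset.card_singleton] at h2
      omega
    have hres := cross_abs A u w hA2 (r S) (r {i}) (hdisj_single S i hiS) hsp
    rw [hl2single i, ← hxS] at hres
    exact hres
  have hAW : r W = r T + r S := funext fun i => (hWsplit i).trans rfl
  have hQup : (∑ j, (A.mulVec (r W)) j ^ 2)
      ≤ (w ^ 2 - u ^ 2) / 2 * (xT + xS) * P := by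
    rw [hkey]
    have hsplit : ∀ i : Fin m, (∑ j, (A.mulVec (r W)) j * (A.mulVec (r {i})) j)
        = (∑ j, (A.mulVec (r T)) j * (A.mulVec (r {i})) j)
          + (∑ j, (A.mulVec (r S)) j * (A.mulVec (r {i})) j) := by
      intro i
      rw [← Finset.sum_add_distrib]
      apply Finset.sum_congr rfl
      intro j _
      rw [hAW, Matrix.mulVec_add, Pi.add_apply]
      ring
    have hexp : (∑ j, (A.mulVec (r W)) j * (A.mulVec (r rest)) j)
        = ∑ i ∈ rest, (∑ j, (A.mulVec (r W)) j * (A.mulVec (r {i})) j) := by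
      rw [hArest]
      calc (∑ j, (A.mulVec (r W)) j * (∑ i ∈ rest, A.mulVec (r {i})) j)
          = ∑ j, ∑ i ∈ rest, (A.mulVec (r W)) j * (A.mulVec (r {i})) j := by
            apply Finset.sum_congr rfl
            intro j _
            rw [Finset.sum_apply, Finset.mul_sum]
        _ = ∑ i ∈ rest, ∑ j, (A.mulVec (r W)) j * (A.mulVec (r {i})) j :=
            Finset.sum_comm
    rw [hexp, ← Finset.sum_neg_distrib]
    calc (∑ i ∈ rest, -(∑ j, (A.mulVec (r W)) j * (A.mulVec (r {i})) j))
        ≤ ∑ i ∈ rest, (w ^ 2 - u ^ 2) / 2 * ((xT + xS) * |v i|) := by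
          apply Finset.sum_le_sum
          intro i hi
          have h1 := hcrossT i hi
          have h2 := hcrossS i hi
          rw [hsplit i]
          have n1 := neg_abs_le (∑ j, (A.mulVec (r T)) j * (A.mulVec (r {i})) j)
          have n2 := neg_abs_le (∑ j, (A.mulVec (r S)) j * (A.mulVec (r {i})) j)
          nlinarith [h1, h2, n1, n2]
      _ = (w ^ 2 - u ^ 2) / 2 * (xT + xS) * P := by
          rw [hP, Finset.mul_sum]
          apply Finset.sum_congr rfl
          intro i _
          ring
  have hquad : xT ^ 2 + xS ^ 2 ≤ (w ^ 2 - u ^ 2) / (2 * u ^ 2) * P * (xT + xS) := by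
    have h1 : u ^ 2 * (xT ^ 2 + xS ^ 2) ≤ (w ^ 2 - u ^ 2) / 2 * (xT + xS) * P := by
      rw [hsumW] at hQlow
      exact hQlow.trans hQup
    have hu2 : (0:ℝ) < u ^ 2 := by positivity
    have h2 : u ^ 2 * ((w ^ 2 - u ^ 2) / (2 * u ^ 2) * P * (xT + xS))
        = (w ^ 2 - u ^ 2) / 2 * (xT + xS) * P := by
      field_simp
    have h1' : u ^ 2 * (xT ^ 2 + xS ^ 2)
        ≤ u ^ 2 * ((w ^ 2 - u ^ 2) / (2 * u ^ 2) * P * (xT + xS)) := by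
      rw [h2]; exact h1
    exact (mul_le_mul_iff_right₀ hu2).mp h1'
  set g := (w ^ 2 - u ^ 2) / (2 * u ^ 2) * P with hgdef
  have hg0 : 0 ≤ g := mul_nonneg (div_nonneg hwu (by positivity)) hP0
  have hs2 : Real.sqrt 2 ^ 2 = 2 := Real.sq_sqrt (by norm_num)
  have hs1 : 1 ≤ Real.sqrt 2 := by nlinarith [Real.sqrt_nonneg 2]
  have hxTg : xT ≤ (Real.sqrt 2 + 1) / 2 * g := by
    rcases eq_or_lt_of_le hg0 with hg | hg
    · have hg' : g = 0 := hg.symm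
      rw [hg', mul_zero]
      rw [hg', zero_mul] at hquad
      nlinarith [hxT0, hxS0, sq_nonneg xS, hquad]
    · have hs2g : Real.sqrt 2 ^ 2 * g ^ 2 = 2 * g ^ 2 := by rw [hs2]
      nlinarith [hquad, hxT0, hxS0, sq_nonneg (2 * xT - g - Real.sqrt 2 * g),
        sq_nonneg (2 * xS - g), mul_pos (lt_of_lt_of_le zero_lt_one hs1) hg, hs2g, hg.le]
  have hPμ : P ≤ ((m : ℝ) - 2 * t) * μ := by
    have hb := Finset.sum_le_card_nsmul rest (fun i => |v i|) μ hrestbound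
    rw [hrestcard] at hb
    rw [hP]
    calc (∑ i ∈ rest, |v i|) ≤ (m - 2 * t : ℕ) • μ := hb
      _ = ((m - 2 * t : ℕ) : ℝ) * μ := nsmul_eq_mul _ _
      _ = ((m : ℝ) - 2 * t) * μ := by
          rw [Nat.cast_sub (by omega)]
          push_cast
          ring
  have hlam1 : (1:ℝ) ≤ lam := by
    rw [hlam, le_div_iff₀ (by positivity)]
    nlinarith
  have ht1R : (1:ℝ) ≤ (t:ℝ) := by exact_mod_cast ht
  have hCg : (Real.sqrt 2 + 1) / 2 * g ≤ C * μ := by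
    rw [hC]
    have hcoeff : (w ^ 2 - u ^ 2) / (2 * u ^ 2) = (lam - 1) / 2 := by
      have hu2ne : (u:ℝ) ^ 2 ≠ 0 := by positivity
      rw [hlam]
      field_simp
    have hstep1 : g ≤ (lam - 1) / 2 * (((m:ℝ) - 2 * t) * μ) := by
      rw [hgdef, hcoeff]
      apply mul_le_mul_of_nonneg_left hPμ (by linarith)
    have hkey2 : (lam - 1) / 2 * ((m:ℝ) - 2 * t)
        ≤ (lam - 1) * ((m : ℝ) - 3) / 2 + lam + Real.sqrt (1 / 2) := by
      nlinarith [Real.sqrt_nonneg (1/2:ℝ),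
        mul_nonneg (sub_nonneg.mpr hlam1) (by linarith : (0:ℝ) ≤ 2 * (t:ℝ) - 2)]
    have hstep2 : (lam - 1) / 2 * (((m:ℝ) - 2 * t) * μ)
        ≤ ((lam - 1) * ((m : ℝ) - 3) / 2 + lam + Real.sqrt (1 / 2)) * μ := by
      calc (lam - 1) / 2 * (((m:ℝ) - 2 * t) * μ)
          = ((lam - 1) / 2 * ((m:ℝ) - 2 * t)) * μ := by ring
        _ ≤ _ := mul_le_mul_of_nonneg_right hkey2 hμpos.le
    calc (Real.sqrt 2 + 1) / 2 * g
        ≤ (Real.sqrt 2 + 1) / 2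
            * (((lam - 1) * ((m : ℝ) - 3) / 2 + lam + Real.sqrt (1 / 2)) * μ) := by
          apply mul_le_mul_of_nonneg_left (hstep1.trans hstep2) (by positivity)
      _ = (Real.sqrt 2 + 1) / 2 * ((lam - 1) * ((m : ℝ) - 3) / 2 + lam + Real.sqrt (1 / 2))
            * μ := by ring
  have hxTC : xT ≤ C * μ := hxTg.trans hCg
  have hentry : ∀ i ∈ T, |v i| ≤ C * μ := by
    intro i hiT
    have h1 : v i ^ 2 ≤ ∑ j ∈ T, v j ^ 2 :=
      Finset.single_le_sum (fun j _ => sq_nonneg (v j)) hiT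
    have h2 : |v i| ≤ xT := by
      rw [hxT]
      have hl2T : l2norm (r T) = Real.sqrt (∑ j ∈ T, v j ^ 2) := by
        simp only [l2norm]
        rw [hsumsq]
      rw [hl2T, ← Real.sqrt_sq_eq_abs]
      exact Real.sqrt_le_sqrt h1
    exact h2.trans hxTC
  -- threshold considerations
  have hsqrthalf : (0:ℝ) < Real.sqrt (1/2) := Real.sqrt_pos.mpr (by norm_num)
  have hm3 : (3:ℝ) ≤ (m:ℝ) := by
    have h3 : (3:ℕ) ≤ m := by omega
    exact_mod_cast h3
  have hC1 : 1 < C := by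
    rw [hC]
    nlinarith [mul_nonneg (sub_nonneg.mpr hlam1) (by linarith : (0:ℝ) ≤ (m:ℝ) - 3),
      hsqrthalf, hs1, hlam1]
  have hC0 : (0:ℝ) < C := lt_trans one_pos hC1
  have hlogC : 0 < Real.log C := Real.log_pos hC1
  have hmono : ∀ k : ℝ, (t:ℝ) ≤ k → h k ≤ h (t:ℝ) := by
    intro k hk
    have htpos : (0:ℝ) < (t:ℝ) := by linarith
    have hkpos : (0:ℝ) < k := lt_of_lt_of_le htpos hk
    rw [hh, hh]
    have hnum : Real.log (k + 1) - Real.log k ≤ Real.log ((t:ℝ) + 1) - Real.log (t:ℝ) := by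
      rw [← Real.log_div (by positivity) (ne_of_gt hkpos),
          ← Real.log_div (by positivity) (ne_of_gt htpos)]
      apply Real.log_le_log (by positivity)
      rw [div_le_div_iff₀ hkpos htpos]
      nlinarith
    exact div_le_div_of_nonneg_right hnum hlogC.le
  have hfeas : A.mulVec (A.transpose.mulVec ((A * A.transpose)⁻¹.mulVec b)) = b := by
    rw [Matrix.mulVec_mulVec, Matrix.mulVec_mulVec, Matrix.mul_nonsing_inv _ hrank,
      Matrix.one_mulVec]
  have hSt : (t:ℝ) ≤ (Sstar:ℝ) := by
    have h1 := hmin _ hfeas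
    have h2 : t ≤ Sstar := by rw [htdef, hSstar]; exact h1
    exact_mod_cast h2
  have hNt : (t:ℝ) ≤ (((2 * m - 5) / 4 + 1 : ℕ):ℝ) := by
    have h4 : t ≤ (2 * m - 5) / 4 + 1 := by omega
    exact_mod_cast h4
  have hpt : p < h (t:ℝ) := by
    apply lt_of_lt_of_le hpp
    rw [hpstar]
    exact max_le (hmono _ hSt) (hmono _ hNt)
  have htpos : (0:ℝ) < (t:ℝ) := by linarith
  have hCp : C ^ p < ((t:ℝ) + 1) / (t:ℝ) := by
    rw [Real.rpow_def_of_pos hC0, mul_comm (Real.log C) p]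
    have h1 : p * Real.log C < Real.log ((t:ℝ) + 1) - Real.log (t:ℝ) := by
      have h2 := hpt
      rw [hh] at h2
      exact (lt_div_iff₀ hlogC).mp h2
    calc Real.exp (p * Real.log C)
        < Real.exp (Real.log ((t:ℝ) + 1) - Real.log (t:ℝ)) := Real.exp_lt_exp.mpr h1
      _ = ((t:ℝ) + 1) / (t:ℝ) := by
          rw [Real.exp_sub, Real.exp_log (by positivity), Real.exp_log htpos]
  have htCp : (t:ℝ) * C ^ p < (t:ℝ) + 1 := by
    have h5 := mul_lt_mul_of_pos_left hCp htpos
    have h6 : (t:ℝ) * (((t:ℝ) + 1) / (t:ℝ)) = (t:ℝ) + 1 := by field_simp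
    rwa [h6] at h5
  -- final assembly
  have hzero : ∀ i, i ∉ T → xstar i = 0 := by
    intro i hiT
    by_contra hc
    exact hiT (Finset.mem_filter.mpr ⟨Finset.mem_univ _, hc⟩)
  have hxsum : ∑ i, |xstar i| ^ p = ∑ i ∈ T, |xstar i| ^ p := by
    rw [← Finset.sum_sdiff (Finset.subset_univ T)]
    have hz : ∑ i ∈ Finset.univ \ T, |xstar i| ^ p = 0 := by
      apply Finset.sum_eq_zero
      intro i hi
      rw [hzero i (Finset.mem_sdiff.mp hi).2, abs_zero, Real.zero_rpow (ne_of_gt hp)]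
    rw [hz, zero_add]
  have hysum : ∑ i, |y i| ^ p = ∑ i ∈ Finset.univ \ T, |y i| ^ p + ∑ i ∈ T, |y i| ^ p :=
    (Finset.sum_sdiff (Finset.subset_univ T)).symm
  have hTbound : ∑ i ∈ T, |xstar i| ^ p ≤ ∑ i ∈ T, |y i| ^ p + ∑ i ∈ T, |v i| ^ p := by
    rw [← Finset.sum_add_distrib]
    apply Finset.sum_le_sum
    intro i _
    have h1 := rpow_tri (xstar i) (v i) hp hp1
    have h2 : xstar i + v i = y i := by rw [hvi i]; ring
    rwa [h2] at h1
  have hTv : ∑ i ∈ T, |v i| ^ p ≤ (t:ℝ) * (C ^ p * μ ^ p) := by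
    calc ∑ i ∈ T, |v i| ^ p ≤ ∑ i ∈ T, (C * μ) ^ p :=
          Finset.sum_le_sum fun i hi =>
            Real.rpow_le_rpow (abs_nonneg _) (hentry i hi) hp.le
      _ = T.card • ((C * μ) ^ p) := Finset.sum_const _
      _ = (t:ℝ) * (C * μ) ^ p := by rw [hTcard, nsmul_eq_mul]
      _ = (t:ℝ) * (C ^ p * μ ^ p) := by rw [Real.mul_rpow hC0.le hμpos.le]
  have hμp : 0 < μ ^ p := Real.rpow_pos_of_pos hμpos p
  have hstrict : (t:ℝ) * (C ^ p * μ ^ p) < ((t:ℝ) + 1) * μ ^ p := by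
    have h7 := mul_lt_mul_of_pos_right htCp hμp
    calc (t:ℝ) * (C ^ p * μ ^ p) = (t:ℝ) * C ^ p * μ ^ p := by ring
      _ < ((t:ℝ) + 1) * μ ^ p := h7
  have hS₁low : ((t:ℝ) + 1) * μ ^ p ≤ ∑ i ∈ S₁, |v i| ^ p := by
    have hterm : ∀ i ∈ S₁, μ ^ p ≤ |v i| ^ p := fun i hi =>
      Real.rpow_le_rpow hμpos.le (hmin₀ i hi) hp.le
    have h8 := Finset.card_nsmul_le_sum S₁ (fun i => |v i| ^ p) (μ ^ p) hterm
    rw [hS₁card, nsmul_eq_mul] at h8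
    push_cast at h8 ⊢
    linarith
  have hS₁y : ∑ i ∈ S₁, |v i| ^ p = ∑ i ∈ S₁, |y i| ^ p := by
    apply Finset.sum_congr rfl
    intro i hi
    have hiT : i ∉ T := hUT i (hS₁U hi)
    rw [hvi i, hzero i hiT, sub_zero]
  have hS₁sub : S₁ ⊆ Finset.univ \ T := fun i hi =>
    Finset.mem_sdiff.mpr ⟨Finset.mem_univ _, hUT i (hS₁U hi)⟩
  have hrest_y : ∑ i ∈ S₁, |y i| ^ p ≤ ∑ i ∈ Finset.univ \ T, |y i| ^ p :=
    Finset.sum_le_sum_of_subset_of_nonneg hS₁sub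
      (fun i _ _ => Real.rpow_nonneg (abs_nonneg _) p)
  rw [hxsum, hysum]
  linarith
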